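/- arXiv:2003.00307 — 2 statements merged into one kernel-verified Lean document; each statement's English description precedes it below -/
import Mathlib

section
/- Suppose L : ℝ^m → ℝ is non-negative, β-smooth, and satisfies the μ-PL* condition in the ball B(w₀, R) with R = 2√(2β L(w₀))/μ. Then gradient descent w_{t+1} = w_t - (1/β) ∇L(w_t) stays in B(w₀, R) for all t and satisfies L(w_t) ≤ (1 - μ/β)^t L(w₀). -/
open RealInnerProductSpace

/-- If `L` is non-negative, β-smooth, and μ-PL* in the ball `B(w₀, R)` with
`R = 2√(2β L(w₀))/μ`, then gradient descent with step size `1/β` stays in the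
ball and converges at rate `L(w_t) ≤ (1 - μ/β)^t L(w₀)`. -/
theorem stmt4 {m : ℕ} (L : EuclideanSpace ℝ (Fin m) → ℝ) (β μ : ℝ)
    (w0 : EuclideanSpace ℝ (Fin m))
    (hβ : 0 < β) (hμ : 0 < μ) (hμβ : μ ≤ β)
    (hnn : ∀ w, 0 ≤ L w)
    (hsmooth : ∀ w v, L v ≤ L w + ⟪gradient L w, v - w⟫ + (β / 2) * ‖v - w‖ ^ 2)
    (R : ℝ) (hR : R = 2 * Real.sqrt (2 * β * L w0) / μ)
    (hPLstar : ∀ w ∈ Metric.closedBall w0 R, μ * L w ≤ (1 / 2) * ‖gradient L w‖ ^ 2)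
    (w : ℕ → EuclideanSpace ℝ (Fin m)) (hw0 : w 0 = w0)
    (hstep : ∀ t, w (t + 1) = w t - (1 / β) • gradient L (w t)) :
    ∀ t, w t ∈ Metric.closedBall w0 R ∧ L (w t) ≤ (1 - μ / β) ^ t * L w0 := by
  set θ : ℝ := 1 - μ / β with hθ
  have hθ0 : 0 ≤ θ := by
    have : μ / β ≤ 1 := (div_le_one hβ).mpr hμβ
    simp only [hθ]; linarith
  have hθ1 : θ ≤ 1 := by
    have : 0 < μ / β := div_pos hμ hβ
    simp only [hθ]; linarith
  set q : ℝ := Real.sqrt θ with hq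
  have hq0 : 0 ≤ q := Real.sqrt_nonneg _
  have hqsq : q ^ 2 = θ := Real.sq_sqrt hθ0
  have hq1 : q ≤ 1 := by
    rw [hq, show (1:ℝ) = Real.sqrt 1 by rw [Real.sqrt_one]]
    exact Real.sqrt_le_sqrt hθ1
  have hβq : β * q ^ 2 = β - μ := by
    rw [hqsq, hθ]; field_simp
  have hμ2β : μ ≤ (1 - q) * (2 * β) := by
    nlinarith [mul_nonneg hβ.le (sq_nonneg (1 - q))]
  set A : ℝ := Real.sqrt (2 * β * L w0) with hA
  have hA0 : 0 ≤ A := Real.sqrt_nonneg _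
  have hAsq : A ^ 2 = 2 * β * L w0 :=
    Real.sq_sqrt (mul_nonneg (by positivity) (hnn w0))
  set C : ℝ := A / β with hC
  have hC0 : 0 ≤ C := by positivity
  have hsum : ∀ n : ℕ, ∑ s ∈ Finset.range n, q ^ s ≤ 2 * β / μ := by
    intro n
    have hgeo := geom_sum_mul q n
    have hS0 : (0:ℝ) ≤ ∑ s ∈ Finset.range n, q ^ s :=
      Finset.sum_nonneg fun i _ => pow_nonneg hq0 i
    have hqn : (0:ℝ) ≤ q ^ n := pow_nonneg hq0 n
    have h3 : (∑ s ∈ Finset.range n, q ^ s) * ((1 - q) * (2 * β))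
        = (1 - q ^ n) * (2 * β) := by linear_combination (-2 * β) * hgeo
    rw [le_div_iff₀ hμ]
    nlinarith [mul_le_mul_of_nonneg_left hμ2β hS0, mul_nonneg hqn hβ.le]
  have hCR : C * (2 * β / μ) = R := by
    rw [hR, hC, hA]; field_simp
  have hball : ∀ n : ℕ, ‖w n - w0‖ ≤ C * ∑ s ∈ Finset.range n, q ^ s →
      w n ∈ Metric.closedBall w0 R := by
    intro n hn
    rw [Metric.mem_closedBall, dist_eq_norm]
    calc ‖w n - w0‖ ≤ C * ∑ s ∈ Finset.range n, q ^ s := hn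
      _ ≤ C * (2 * β / μ) := mul_le_mul_of_nonneg_left (hsum n) hC0
      _ = R := hCR
  have key : ∀ n : ℕ, ‖w n - w0‖ ≤ C * ∑ s ∈ Finset.range n, q ^ s ∧
      L (w n) ≤ θ ^ n * L w0 := by
    intro n
    induction n with
    | zero => simp [hw0]
    | succ n ih =>
      obtain ⟨ihd, ihL⟩ := ih
      have hmem := hball n ihd
      set g := gradient L (w n) with hg
      have hdiff : w (n + 1) - w n = -((1 / β) • g) := by
        rw [hstep n]; abel
      have hdesc : L (w (n + 1)) ≤ L (w n) - 1 / (2 * β) * ‖g‖ ^ 2 := by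
        have h := hsmooth (w n) (w (n + 1))
        rw [hdiff, inner_neg_right, real_inner_smul_right, real_inner_self_eq_norm_sq,
          norm_neg, norm_smul, Real.norm_eq_abs, abs_of_pos (by positivity : (0:ℝ) < 1/β),
          mul_pow] at h
        have e : L (w n) + -(1 / β * ‖g‖ ^ 2) + β / 2 * ((1 / β) ^ 2 * ‖g‖ ^ 2)
            = L (w n) - 1 / (2 * β) * ‖g‖ ^ 2 := by field_simp; ring
        linarith [h, e.le, e.ge]
      have hβdesc : 2 * β * L (w (n + 1)) ≤ 2 * β * L (w n) - ‖g‖ ^ 2 := by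
        have h2 := mul_le_mul_of_nonneg_left hdesc (by positivity : (0:ℝ) ≤ 2 * β)
        have e : 2 * β * (L (w n) - 1 / (2 * β) * ‖g‖ ^ 2)
            = 2 * β * L (w n) - ‖g‖ ^ 2 := by field_simp
        linarith
      have hPL := hPLstar (w n) hmem
      have hθeq : θ = (β - μ) / β := by rw [hθ]; field_simp
      have h1 : L (w (n + 1)) ≤ θ * L (w n) := by
        rw [hθeq, div_mul_eq_mul_div, le_div_iff₀ hβ]
        nlinarith
      have hLstep : L (w (n + 1)) ≤ θ ^ (n + 1) * L w0 :=
        calc L (w (n + 1)) ≤ θ * L (w n) := h1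
          _ ≤ θ * (θ ^ n * L w0) := mul_le_mul_of_nonneg_left ihL hθ0
          _ = θ ^ (n + 1) * L w0 := by ring
      refine ⟨?_, hLstep⟩
      have hgsq : ‖g‖ ^ 2 ≤ 2 * β * L (w n) := by
        have h0 : (0:ℝ) ≤ 2 * β * L (w (n + 1)) :=
          mul_nonneg (by positivity) (hnn _)
        linarith
      have hqn2 : (q ^ n) ^ 2 = θ ^ n := by
        rw [← hqsq, ← pow_mul, ← pow_mul, Nat.mul_comm]
      have h1' : ‖g‖ ^ 2 ≤ (A * q ^ n) ^ 2 := by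
        have e : (A * q ^ n) ^ 2 = 2 * β * (θ ^ n * L w0) := by
          calc (A * q ^ n) ^ 2 = A ^ 2 * (q ^ n) ^ 2 := by ring
            _ = 2 * β * (θ ^ n * L w0) := by rw [hAsq, hqn2]; ring
        have h2 : 2 * β * L (w n) ≤ 2 * β * (θ ^ n * L w0) :=
          mul_le_mul_of_nonneg_left ihL (by positivity)
        linarith [e.ge]
      have hgA : ‖g‖ ≤ A * q ^ n := by
        have h2 := Real.sqrt_le_sqrt h1'
        rwa [Real.sqrt_sq (norm_nonneg g),
          Real.sqrt_sq (mul_nonneg hA0 (pow_nonneg hq0 n))] at h2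
      have htri : ‖w (n + 1) - w0‖ ≤ ‖w n - w0‖ + 1 / β * ‖g‖ := by
        have e : w (n + 1) - w0 = (w n - w0) + (w (n + 1) - w n) := by abel
        rw [e]
        calc ‖(w n - w0) + (w (n + 1) - w n)‖ ≤ ‖w n - w0‖ + ‖w (n + 1) - w n‖ :=
              norm_add_le _ _
          _ = ‖w n - w0‖ + 1 / β * ‖g‖ := by
              rw [hdiff, norm_neg, norm_smul, Real.norm_eq_abs,
                abs_of_pos (by positivity : (0:ℝ) < 1/β)]
      calc ‖w (n + 1) - w0‖ ≤ ‖w n - w0‖ + 1 / β * ‖g‖ := htri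
        _ ≤ C * (∑ s ∈ Finset.range n, q ^ s) + 1 / β * (A * q ^ n) := by
            have := mul_le_mul_of_nonneg_left hgA (by positivity : (0:ℝ) ≤ 1 / β)
            linarith
        _ = C * ∑ s ∈ Finset.range (n + 1), q ^ s := by
            rw [Finset.sum_range_succ, hC]; ring
  intro t
  obtain ⟨hd, hL⟩ := key t
  exact ⟨hball t hd, hL⟩
end

section
/- Suppose L : ℝ^m → ℝ is non-negative, β-smooth, and satisfies the μ-PL* condition in the ball B(w₀, R) with R = 2√(2β L(w₀))/μ. Then there exists a global minimum w* ∈ B(w₀, R) with L(w*) = 0. -/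
open RealInnerProductSpace

lemma descent_aux {m : ℕ} (L : EuclideanSpace ℝ (Fin m) → ℝ) (β : ℝ) (hβ : 0 < β)
    (hsmooth : ∀ w v, L v ≤ L w + ⟪gradient L w, v - w⟫ + (β / 2) * ‖v - w‖ ^ 2)
    (u : EuclideanSpace ℝ (Fin m)) :
    L (u - β⁻¹ • gradient L u) ≤ L u - (1/(2*β)) * ‖gradient L u‖ ^ 2 := by
  have h := hsmooth u (u - β⁻¹ • gradient L u)
  set g := gradient L u with hg
  have hsub : u - β⁻¹ • g - u = -(β⁻¹ • g) := by abel
  rw [hsub] at h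
  have h1 : ⟪g, -(β⁻¹ • g)⟫ = -(β⁻¹ * ‖g‖^2) := by
    rw [inner_neg_right, real_inner_smul_right, real_inner_self_eq_norm_sq]
  have h2 : ‖-(β⁻¹ • g)‖^2 = (β⁻¹)^2 * ‖g‖^2 := by
    rw [norm_neg, norm_smul, mul_pow, Real.norm_eq_abs,
      abs_of_pos (inv_pos.mpr hβ)]
  rw [h1, h2] at h
  have hβ' : β ≠ 0 := ne_of_gt hβ
  calc L (u - β⁻¹ • g) ≤ L u + -(β⁻¹ * ‖g‖^2) + β/2 * ((β⁻¹)^2 * ‖g‖^2) := h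
    _ = L u - (1/(2*β)) * ‖g‖^2 := by field_simp; ring

/-- Gradient descent sequence with step size `β⁻¹`. -/
noncomputable def gdSeq {m : ℕ} (L : EuclideanSpace ℝ (Fin m) → ℝ) (β : ℝ)
    (w0 : EuclideanSpace ℝ (Fin m)) : ℕ → EuclideanSpace ℝ (Fin m)
  | 0 => w0
  | (k+1) => gdSeq L β w0 k - β⁻¹ • gradient L (gdSeq L β w0 k)

set_option maxHeartbeats 1000000 in
/-- If `L` is non-negative, β-smooth, and μ-PL* in the ball `B(w₀, R)` with
`R = 2√(2β L(w₀))/μ`, then there exists a global minimum `w* ∈ B(w₀, R)`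
with `L(w*) = 0`. -/
theorem stmt5 {m : ℕ} (L : EuclideanSpace ℝ (Fin m) → ℝ) (β μ : ℝ)
    (w0 : EuclideanSpace ℝ (Fin m))
    (hβ : 0 < β) (hμ : 0 < μ) (hμβ : μ ≤ β)
    (hdiff : Differentiable ℝ L)
    (hnn : ∀ w, 0 ≤ L w)
    (hsmooth : ∀ w v, L v ≤ L w + ⟪gradient L w, v - w⟫ + (β / 2) * ‖v - w‖ ^ 2)
    (R : ℝ) (hR : R = 2 * Real.sqrt (2 * β * L w0) / μ)
    (hPLstar : ∀ w ∈ Metric.closedBall w0 R, μ * L w ≤ (1 / 2) * ‖gradient L w‖ ^ 2) :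
    ∃ wstar ∈ Metric.closedBall w0 R, (∀ v, L wstar ≤ L v) ∧ L wstar = 0 := by
  have hL0 : 0 ≤ L w0 := hnn w0
  obtain ⟨θ, hθdef⟩ : ∃ θ : ℝ, θ = 1 - μ/β := ⟨_, rfl⟩
  have hθ0 : 0 ≤ θ := by
    have : μ/β ≤ 1 := (div_le_one hβ).mpr hμβ
    linarith
  have hθ1 : θ < 1 := by
    have : 0 < μ/β := div_pos hμ hβ
    linarith
  obtain ⟨s, hsdef⟩ : ∃ s : ℝ, s = Real.sqrt θ := ⟨_, rfl⟩
  have hs0 : 0 ≤ s := hsdef ▸ Real.sqrt_nonneg θ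
  have hssq : s^2 = θ := hsdef ▸ Real.sq_sqrt hθ0
  have hs1 : s < 1 := by nlinarith
  obtain ⟨D, hDdef⟩ : ∃ D : ℝ, D = Real.sqrt (2 * β * L w0) := ⟨_, rfl⟩
  have hD0 : 0 ≤ D := hDdef ▸ Real.sqrt_nonneg _
  have hDsq : D^2 = 2 * β * L w0 := hDdef ▸ Real.sq_sqrt (by positivity)
  rw [← hDdef] at hR
  obtain ⟨C, hCdef⟩ : ∃ C : ℝ, C = D / β := ⟨_, rfl⟩
  have hC0 : 0 ≤ C := by rw [hCdef]; positivity
  -- 1 - s ≥ μ/(2β)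
  have hx1 : μ/β ≤ 1 := (div_le_one hβ).mpr hμβ
  have hx0 : 0 < μ/β := div_pos hμ hβ
  have hgap : μ/(2*β) ≤ 1 - s := by
    have h1 : s ≤ 1 - (μ/β)/2 := by nlinarith
    have h2 : μ/(2*β) = (μ/β)/2 := by
      field_simp
    linarith
  have hR0 : 0 ≤ R := by rw [hR]; positivity
  have hCR : C / (1 - s) ≤ R := by
    rw [div_le_iff₀ (by linarith)]
    have h1 : R * (μ/(2*β)) ≤ R * (1 - s) :=
      mul_le_mul_of_nonneg_left hgap hR0
    have h2 : R * (μ/(2*β)) = C := by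
      rw [hR, hCdef]; field_simp
    linarith
  have hgeomsum : ∀ k : ℕ, ∑ i ∈ Finset.range k, s^i ≤ 1/(1-s) := by
    intro k
    have hsum := hasSum_geometric_of_lt_one hs0 hs1
    have h := sum_le_hasSum (Finset.range k) (fun i _ => pow_nonneg hs0 i) hsum
    rw [one_div]
    exact h
  set w : ℕ → EuclideanSpace ℝ (Fin m) := gdSeq L β w0 with hw
  have hw0 : w 0 = w0 := rfl
  have hwstep : ∀ k, w (k+1) = w k - β⁻¹ • gradient L (w k) := fun k => rfl
  -- gradient norm bound (needs only smoothness + nonnegativity)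
  have hgsq : ∀ u, ‖gradient L u‖^2 ≤ 2 * β * L u := by
    intro u
    have h := descent_aux L β hβ hsmooth u
    have h2 := hnn (u - β⁻¹ • gradient L u)
    have h3 : (1/(2*β)) * ‖gradient L u‖^2 ≤ L u := by linarith
    have h4 : ‖gradient L u‖^2 = (2*β) * ((1/(2*β)) * ‖gradient L u‖^2) := by
      field_simp
    rw [h4]
    calc (2*β) * ((1/(2*β)) * ‖gradient L u‖^2) ≤ (2*β) * L u :=
          mul_le_mul_of_nonneg_left h3 (by positivity)
      _ = 2 * β * L u := by ring
  -- main invariant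
  have key : ∀ k, L (w k) ≤ θ^k * L w0 ∧ dist (w k) w0 ≤ C * ∑ i ∈ Finset.range k, s^i := by
    intro k
    induction k with
    | zero => simp [hw0]
    | succ k ih =>
      obtain ⟨hLk, hdk⟩ := ih
      have hball : w k ∈ Metric.closedBall w0 R := by
        rw [Metric.mem_closedBall]
        calc dist (w k) w0 ≤ C * ∑ i ∈ Finset.range k, s^i := hdk
          _ ≤ C * (1/(1-s)) := mul_le_mul_of_nonneg_left (hgeomsum k) hC0
          _ = C / (1-s) := by ring
          _ ≤ R := hCR
      have hPL := hPLstar (w k) hball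
      have hdesc := descent_aux L β hβ hsmooth (w k)
      have hLsucc : L (w (k+1)) ≤ θ * L (w k) := by
        rw [hwstep]
        have hβ' : (0:ℝ) < 1/(2*β) := by positivity
        have heq : θ * L (w k) = L (w k) - (μ/β) * L (w k) := by rw [hθdef]; ring
        rw [heq]
        have h3 : (1/(2*β)) * (2 * μ * L (w k)) ≤ (1/(2*β)) * ‖gradient L (w k)‖^2 := by
          apply mul_le_mul_of_nonneg_left _ (le_of_lt hβ')
          nlinarith
        have h4 : (1/(2*β)) * (2 * μ * L (w k)) = (μ/β) * L (w k) := by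
          field_simp
        nlinarith
      constructor
      · calc L (w (k+1)) ≤ θ * L (w k) := hLsucc
          _ ≤ θ * (θ^k * L w0) := mul_le_mul_of_nonneg_left hLk hθ0
          _ = θ^(k+1) * L w0 := by ring
      · -- step size bound
        have hstep : dist (w (k+1)) (w k) ≤ C * s^k := by
          rw [hwstep, dist_eq_norm]
          have heq2 : w k - β⁻¹ • gradient L (w k) - w k = -(β⁻¹ • gradient L (w k)) := by
            abel
          rw [heq2, norm_neg, norm_smul, Real.norm_eq_abs, abs_of_pos (inv_pos.mpr hβ)]
          have hg2 : ‖gradient L (w k)‖^2 ≤ 2 * β * (θ^k * L w0) := by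
            have h5 := hgsq (w k)
            have h2 : 2 * β * L (w k) ≤ 2 * β * (θ^k * L w0) :=
              mul_le_mul_of_nonneg_left hLk (by positivity)
            linarith
          have hg3 : ‖gradient L (w k)‖ ≤ D * s^k := by
            have hrhs : 0 ≤ D * s^k := by positivity
            have hsq : (D * s^k)^2 = 2 * β * (θ^k * L w0) := by
              have hsk : (s^k)^2 = θ^k := by
                rw [← hssq]; ring
              rw [mul_pow, hDsq, hsk]; ring
            nlinarith [norm_nonneg (gradient L (w k))]
          calc β⁻¹ * ‖gradient L (w k)‖ ≤ β⁻¹ * (D * s^k) :=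
                mul_le_mul_of_nonneg_left hg3 (le_of_lt (inv_pos.mpr hβ))
            _ = C * s^k := by rw [hCdef]; ring
        calc dist (w (k+1)) w0 ≤ dist (w (k+1)) (w k) + dist (w k) w0 := dist_triangle _ _ _
          _ ≤ C * s^k + C * ∑ i ∈ Finset.range k, s^i := add_le_add hstep hdk
          _ = C * ∑ i ∈ Finset.range (k+1), s^i := by
              rw [Finset.sum_range_succ]; ring
  -- ball membership for all k
  have hballall : ∀ k, w k ∈ Metric.closedBall w0 R := by
    intro k
    rw [Metric.mem_closedBall]
    calc dist (w k) w0 ≤ C * ∑ i ∈ Finset.range k, s^i := (key k).2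
      _ ≤ C * (1/(1-s)) := mul_le_mul_of_nonneg_left (hgeomsum k) hC0
      _ = C / (1-s) := by ring
      _ ≤ R := hCR
  -- Cauchy sequence
  have hstepall : ∀ k, dist (w k) (w (k+1)) ≤ C * s^k := by
    intro k
    rw [dist_comm, hwstep, dist_eq_norm]
    have heq2 : w k - β⁻¹ • gradient L (w k) - w k = -(β⁻¹ • gradient L (w k)) := by abel
    rw [heq2, norm_neg, norm_smul, Real.norm_eq_abs, abs_of_pos (inv_pos.mpr hβ)]
    have hg2 : ‖gradient L (w k)‖^2 ≤ 2 * β * (θ^k * L w0) := by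
      have h5 := hgsq (w k)
      have h2 : 2 * β * L (w k) ≤ 2 * β * (θ^k * L w0) :=
        mul_le_mul_of_nonneg_left (key k).1 (by positivity)
      linarith
    have hg3 : ‖gradient L (w k)‖ ≤ D * s^k := by
      have hrhs : 0 ≤ D * s^k := by positivity
      have hsq : (D * s^k)^2 = 2 * β * (θ^k * L w0) := by
        have hsk : (s^k)^2 = θ^k := by
          rw [← hssq]; ring
        rw [mul_pow, hDsq, hsk]; ring
      nlinarith [norm_nonneg (gradient L (w k))]
    calc β⁻¹ * ‖gradient L (w k)‖ ≤ β⁻¹ * (D * s^k) :=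
          mul_le_mul_of_nonneg_left hg3 (le_of_lt (inv_pos.mpr hβ))
      _ = C * s^k := by rw [hCdef]; ring
  have hcauchy : CauchySeq w := cauchySeq_of_le_geometric s C hs1 hstepall
  obtain ⟨wstar, hlim⟩ := cauchySeq_tendsto_of_complete hcauchy
  have hz : L wstar = 0 := by
    have h1 : Filter.Tendsto (fun k => L (w k)) Filter.atTop (nhds (L wstar)) :=
      (hdiff.continuous.tendsto wstar).comp hlim
    have h2 : Filter.Tendsto (fun k => L (w k)) Filter.atTop (nhds 0) := by
      apply squeeze_zero (fun k => hnn (w k)) (fun k => (key k).1)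
      have := (tendsto_pow_atTop_nhds_zero_of_lt_one hθ0 hθ1).mul_const (L w0)
      simpa using this
    exact tendsto_nhds_unique h1 h2
  refine ⟨wstar, ?_, ?_, hz⟩
  · exact Metric.isClosed_closedBall.mem_of_tendsto hlim
      (Filter.Eventually.of_forall hballall)
  · intro v; rw [hz]; exact hnn v
end
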